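/- arXiv:2404.16554 — 8 statements merged into one kernel-verified Lean document; each statement's English description precedes it below -/
import Mathlib

section
/- One step of the implicit (backward Euler) scheme satisfies: ‖uⁿ‖_L² ≤ ‖uⁿ⁻¹‖_L² + (τ/2) (fⁿ)ᵀ (C + (τ/2) L)⁻¹ fⁿ. (Here C + (τ/2)L is symmetric positive definite, hence invertible.) -/
open Matrix

lemma symm_dot {n : ℕ} (A : Matrix (Fin n) (Fin n) ℝ) (hA : Aᵀ = A)
    (x y : Fin n → ℝ) : x ⬝ᵥ (A *ᵥ y) = y ⬝ᵥ (A *ᵥ x) := by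
  rw [Matrix.dotProduct_mulVec, ← Matrix.mulVec_transpose, hA, dotProduct_comm]

/-- One step of the implicit (backward Euler) scheme satisfies
`‖uⁿ‖_L² ≤ ‖uⁿ⁻¹‖_L² + (τ/2) (fⁿ)ᵀ (C + (τ/2)L)⁻¹ fⁿ`. -/
theorem backward_euler_one_step_stability (N : ℕ) (hN : 1 ≤ N)
    (C L : Matrix (Fin N) (Fin N) ℝ) (hC : C.PosDef) (hL : L.PosSemidef)
    (τ : ℝ) (hτ : 0 < τ)
    (uPrev uCur fn : Fin N → ℝ)
    (heq : C *ᵥ (τ⁻¹ • (uCur - uPrev)) + L *ᵥ uCur = fn) :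
    uCur ⬝ᵥ (L *ᵥ uCur) ≤
      uPrev ⬝ᵥ (L *ᵥ uPrev) + (τ / 2) * (fn ⬝ᵥ ((C + (τ / 2) • L)⁻¹ *ᵥ fn)) := by
  set w : Fin N → ℝ := τ⁻¹ • (uCur - uPrev) with hw
  have hup : uPrev = uCur - τ • w := by
    rw [hw, smul_smul, mul_inv_cancel₀ hτ.ne', one_smul]
    abel
  set M := C + (τ / 2) • L with hMdef
  have hLsm : ((τ / 2) • L).PosSemidef := by
    refine PosSemidef.of_dotProduct_mulVec_nonneg ?_ (fun x => ?_)
    · have h1 := hL.1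
      simp only [Matrix.IsHermitian, Matrix.conjTranspose_smul] at h1 ⊢
      rw [h1]; simp
    · have h2 := hL.dotProduct_mulVec_nonneg x
      rw [Matrix.smul_mulVec, dotProduct_smul, smul_eq_mul]
      have : (0:ℝ) ≤ τ / 2 := by positivity
      exact mul_nonneg this h2
  have hMpd : M.PosDef := hC.add_posSemidef hLsm
  have hsymC : Cᵀ = C := by simpa [Matrix.IsSymm] using hC.isHermitian
  have hsymL : Lᵀ = L := by simpa [Matrix.IsSymm] using hL.isHermitian
  have hsymM : Mᵀ = M := by simpa [Matrix.IsSymm] using hMpd.isHermitian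
  have hMunit : IsUnit M.det := isUnit_iff_ne_zero.mpr hMpd.det_pos.ne'
  have hMg : M *ᵥ (M⁻¹ *ᵥ fn) = fn := by
    rw [Matrix.mulVec_mulVec, Matrix.mul_nonsing_inv M hMunit, Matrix.one_mulVec]
  set g : Fin N → ℝ := M⁻¹ *ᵥ fn with hg
  set z : Fin N → ℝ := w - (1/2 : ℝ) • g with hz
  have hzpos : 0 ≤ z ⬝ᵥ (M *ᵥ z) := by
    have := hMpd.posSemidef.dotProduct_mulVec_nonneg z
    simpa using this
  have hfn : fn = C *ᵥ w + L *ᵥ uCur := heq.symm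
  -- scalar abbreviations
  have hMw : ∀ x : Fin N → ℝ, M *ᵥ x = C *ᵥ x + (τ/2) • (L *ᵥ x) := by
    intro x; rw [hMdef, Matrix.add_mulVec, Matrix.smul_mulVec]
  have hwfn : w ⬝ᵥ fn = w ⬝ᵥ (C *ᵥ w) + uCur ⬝ᵥ (L *ᵥ w) := by
    rw [hfn, dotProduct_add, symm_dot L hsymL]
  have hwMg : w ⬝ᵥ (M *ᵥ g) = w ⬝ᵥ fn := by rw [hMg]
  have hgMw : g ⬝ᵥ (M *ᵥ w) = w ⬝ᵥ fn := by rw [symm_dot M hsymM, hMg]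
  have hgMg : g ⬝ᵥ (M *ᵥ g) = fn ⬝ᵥ g := by rw [hMg, dotProduct_comm]
  have hexp : z ⬝ᵥ (M *ᵥ z) = w ⬝ᵥ (M *ᵥ w) - (1/2) * (w ⬝ᵥ (M *ᵥ g))
      - (1/2) * (g ⬝ᵥ (M *ᵥ w)) + (1/4) * (g ⬝ᵥ (M *ᵥ g)) := by
    simp only [hz, Matrix.mulVec_sub, Matrix.mulVec_smul, dotProduct_sub, sub_dotProduct,
      smul_dotProduct, dotProduct_smul, smul_eq_mul]
    ring
  rw [hwMg, hgMw, hgMg] at hexp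
  have hexp2 : z ⬝ᵥ (M *ᵥ z) = w ⬝ᵥ (M *ᵥ w) - w ⬝ᵥ fn + (1/4) * (fn ⬝ᵥ g) := by
    rw [hexp]; ring
  have hwMw : w ⬝ᵥ (M *ᵥ w) = w ⬝ᵥ (C *ᵥ w) + (τ/2) * (w ⬝ᵥ (L *ᵥ w)) := by
    rw [hMw, dotProduct_add, dotProduct_smul, smul_eq_mul]
  have hprev : uPrev ⬝ᵥ (L *ᵥ uPrev)
      = uCur ⬝ᵥ (L *ᵥ uCur) - 2 * τ * (uCur ⬝ᵥ (L *ᵥ w)) + τ^2 * (w ⬝ᵥ (L *ᵥ w)) := by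
    rw [hup]
    simp only [Matrix.mulVec_sub, Matrix.mulVec_smul, dotProduct_sub, sub_dotProduct,
      smul_dotProduct, dotProduct_smul, smul_eq_mul, symm_dot L hsymL w uCur]
    ring
  rw [hexp2, hwMw, hwfn] at hzpos
  rw [hprev]
  nlinarith [hτ, hzpos]
end

section
/- The solution of the fully discrete implicit scheme is unconditionally stable: for every n ≥ 1, ‖uⁿ‖_L² ≤ ‖u⁰‖_L² + (τ/2) Σ_{k=1}^n (fᵏ)ᵀ (C + (τ/2) L)⁻¹ fᵏ. -/
open Matrix

private lemma sym_dot {N : ℕ} {A : Matrix (Fin N) (Fin N) ℝ} (hA : Aᵀ = A)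
    (x y : Fin N → ℝ) : x ⬝ᵥ (A *ᵥ y) = y ⬝ᵥ (A *ᵥ x) := by
  rw [dotProduct_mulVec, ← mulVec_transpose, hA, dotProduct_comm]

/-- Unconditional stability of the fully discrete implicit scheme:
for every `n ≥ 1`, `‖uⁿ‖_L² ≤ ‖u⁰‖_L² + (τ/2) Σ_{k=1}^n (fᵏ)ᵀ (C + (τ/2)L)⁻¹ fᵏ`. -/
theorem backward_euler_unconditional_stability (N : ℕ) (hN : 1 ≤ N)
    (C L : Matrix (Fin N) (Fin N) ℝ) (hC : C.PosDef) (hL : L.PosSemidef)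
    (τ : ℝ) (hτ : 0 < τ)
    (u : ℕ → Fin N → ℝ) (f : ℕ → Fin N → ℝ)
    (heq : ∀ n : ℕ, 1 ≤ n →
      C *ᵥ (τ⁻¹ • (u n - u (n - 1))) + L *ᵥ u n = f n) :
    ∀ n : ℕ, 1 ≤ n →
      u n ⬝ᵥ (L *ᵥ u n) ≤
        u 0 ⬝ᵥ (L *ᵥ u 0) +
          (τ / 2) * ∑ k ∈ Finset.Icc 1 n, f k ⬝ᵥ ((C + (τ / 2) • L)⁻¹ *ᵥ f k) := by
  set M : Matrix (Fin N) (Fin N) ℝ := C + (τ / 2) • L with hMdef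
  have hLsymm : Lᵀ = L := hL.1
  have hsmul : ((τ / 2) • L).PosSemidef := by
    refine .of_dotProduct_mulVec_nonneg ?_ (fun x => ?_)
    · show ((τ / 2) • L)ᴴ = (τ / 2) • L
      rw [conjTranspose_smul]
      simp only [star_trivial]
      exact congrArg _ hL.1
    · have := hL.dotProduct_mulVec_nonneg x
      simp only [star_trivial, smul_mulVec, dotProduct_smul, smul_eq_mul] at *
      positivity
  have hM : M.PosDef := hC.add_posSemidef hsmul
  have hApd : (M⁻¹).PosDef := hM.inv
  have hAsymm : (M⁻¹)ᵀ = M⁻¹ := hApd.1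
  have hinv : M⁻¹ * M = 1 :=
    Matrix.nonsing_inv_mul M (isUnit_iff_ne_zero.mpr hM.det_pos.ne')
  -- per-step estimate
  have step : ∀ n : ℕ, 1 ≤ n →
      u n ⬝ᵥ (L *ᵥ u n) ≤ u (n-1) ⬝ᵥ (L *ᵥ u (n-1)) +
        (τ / 2) * (f n ⬝ᵥ (M⁻¹ *ᵥ f n)) := by
    intro n hn
    set a := u n
    set b := u (n-1)
    set v : Fin N → ℝ := τ⁻¹ • (a - b) with hv
    set w : Fin N → ℝ := L *ᵥ ((1/2 : ℝ) • (a + b)) with hw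
    set p := f n with hp
    have hab : a - b = τ • v := by
      rw [hv, smul_smul, mul_inv_cancel₀ hτ.ne', one_smul]
    have hMv : M *ᵥ v = p - w := by
      have h1 : C *ᵥ v + L *ᵥ a = p := heq n hn
      have h2 : a = (1/2 : ℝ) • (a + b) + (τ/2) • v := by
        rw [hv]
        funext i
        simp only [Pi.smul_apply, Pi.add_apply, Pi.sub_apply, smul_eq_mul]
        field_simp
        ring
      rw [hMdef, add_mulVec, smul_mulVec]
      have h3 : L *ᵥ a = w + (τ/2) • (L *ᵥ v) := by
        conv_lhs => rw [h2]
        rw [mulVec_add, mulVec_smul, hw]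
        simp only [mulVec_smul]
      rw [← h1, h3]
      abel
    have hvA : v = M⁻¹ *ᵥ (p - w) := by
      rw [← hMv, mulVec_mulVec, hinv, one_mulVec]
    -- energy difference identity
    have hdiff : a ⬝ᵥ (L *ᵥ a) - b ⬝ᵥ (L *ᵥ b) = 2 * τ * (w ⬝ᵥ v) := by
      have hswap : a ⬝ᵥ (L *ᵥ b) = b ⬝ᵥ (L *ᵥ a) := sym_dot hLsymm a b
      have e1 : (a + b) ⬝ᵥ (L *ᵥ (a - b)) = a ⬝ᵥ (L *ᵥ a) - b ⬝ᵥ (L *ᵥ b) := by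
        rw [add_dotProduct, mulVec_sub, dotProduct_sub, dotProduct_sub, hswap]
        ring
      have e2 : w ⬝ᵥ v = (1/2 : ℝ) * ((a + b) ⬝ᵥ (L *ᵥ v)) := by
        rw [hw, mulVec_smul, smul_dotProduct, smul_eq_mul, dotProduct_comm,
          sym_dot hLsymm v (a + b)]
      rw [e2, ← e1, hab, mulVec_smul, dotProduct_smul, smul_eq_mul]
      ring
    -- quadratic inequality
    set wAw := w ⬝ᵥ (M⁻¹ *ᵥ w) with hwAw
    set wAp := w ⬝ᵥ (M⁻¹ *ᵥ p) with hwAp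
    set pAp := p ⬝ᵥ (M⁻¹ *ᵥ p) with hpAp
    have hpw : p ⬝ᵥ (M⁻¹ *ᵥ w) = wAp := sym_dot hAsymm p w
    have hwv : w ⬝ᵥ v = wAp - wAw := by
      rw [hvA, mulVec_sub, dotProduct_sub]
    have hpos : 0 ≤ (p - (2:ℝ) • w) ⬝ᵥ (M⁻¹ *ᵥ (p - (2:ℝ) • w)) := by
      have := hApd.posSemidef.dotProduct_mulVec_nonneg (p - (2:ℝ) • w)
      simpa using this
    have hexp : (p - (2:ℝ) • w) ⬝ᵥ (M⁻¹ *ᵥ (p - (2:ℝ) • w))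
        = pAp - 4 * wAp + 4 * wAw := by
      simp only [mulVec_sub, mulVec_smul, sub_dotProduct, dotProduct_sub,
        smul_dotProduct, dotProduct_smul, smul_eq_mul]
      rw [hpw, ← hpAp, ← hwAp, ← hwAw]
      ring
    rw [hexp] at hpos
    have : a ⬝ᵥ (L *ᵥ a) = b ⬝ᵥ (L *ᵥ b) + 2 * τ * (wAp - wAw) := by
      rw [← hwv]; linarith [hdiff]
    rw [this]
    nlinarith [mul_nonneg hτ.le hpos]
  -- induction
  have main : ∀ n : ℕ,
      u n ⬝ᵥ (L *ᵥ u n) ≤ u 0 ⬝ᵥ (L *ᵥ u 0) +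
        (τ / 2) * ∑ k ∈ Finset.Icc 1 n, f k ⬝ᵥ (M⁻¹ *ᵥ f k) := by
    intro n
    induction n with
    | zero => simp
    | succ m ih =>
      have hs := step (m+1) (Nat.le_add_left 1 m)
      simp only [Nat.add_sub_cancel] at hs
      rw [Finset.sum_Icc_succ_top (Nat.le_add_left 1 m)]
      calc u (m+1) ⬝ᵥ (L *ᵥ u (m+1))
          ≤ u m ⬝ᵥ (L *ᵥ u m) + (τ/2) * (f (m+1) ⬝ᵥ (M⁻¹ *ᵥ f (m+1))) := hs
        _ ≤ u 0 ⬝ᵥ (L *ᵥ u 0) + (τ/2) * ∑ k ∈ Finset.Icc 1 m, f k ⬝ᵥ (M⁻¹ *ᵥ f k)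
              + (τ/2) * (f (m+1) ⬝ᵥ (M⁻¹ *ᵥ f (m+1))) := by linarith
        _ = _ := by ring
  intro n _
  exact main n
end

section
/- The Galerkin (multiscale) fully discrete solution is unconditionally stable: for every n ≥ 1, ‖u_msⁿ‖_L² ≤ ‖u_ms⁰‖_L² + (τ/2) Σ_{k=1}^n (fᵏ)ᵀ (C + (τ/2) L)⁻¹ fᵏ. -/
open Matrix

lemma herm_symm_dot {N : ℕ} {L : Matrix (Fin N) (Fin N) ℝ} (hL : L.IsHermitian)
    (x y : Fin N → ℝ) : x ⬝ᵥ (L *ᵥ y) = y ⬝ᵥ (L *ᵥ x) := by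
  have hsym : Lᵀ = L := by
    ext i j; simpa using congrFun (congrFun hL i) j
  rw [dotProduct_mulVec, dotProduct_comm, ← mulVec_transpose, hsym]

lemma young_matrix {N : ℕ} {M : Matrix (Fin N) (Fin N) ℝ} (hM : M.PosDef) (w f : Fin N → ℝ) :
    2 * (w ⬝ᵥ f) ≤ w ⬝ᵥ (M *ᵥ w) + f ⬝ᵥ (M⁻¹ *ᵥ f) := by
  set g := M⁻¹ *ᵥ f with hg
  have hMg : M *ᵥ g = f := by
    rw [hg, mulVec_mulVec, mul_nonsing_inv _ hM.det_pos.ne'.isUnit, one_mulVec]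
  have h0 : 0 ≤ (w - g) ⬝ᵥ (M *ᵥ (w - g)) := by
    have := hM.posSemidef.dotProduct_mulVec_nonneg (w - g)
    simpa using this
  have hexp : (w - g) ⬝ᵥ (M *ᵥ (w - g)) =
      w ⬝ᵥ (M *ᵥ w) - 2 * (w ⬝ᵥ f) + f ⬝ᵥ g := by
    rw [mulVec_sub, sub_dotProduct, dotProduct_sub, dotProduct_sub, hMg]
    have h1 : g ⬝ᵥ (M *ᵥ w) = w ⬝ᵥ (M *ᵥ g) := herm_symm_dot hM.isHermitian g w
    rw [h1, hMg]
    have h2 : g ⬝ᵥ f = f ⬝ᵥ g := dotProduct_comm g f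
    rw [h2, dotProduct_comm w f]
    ring
  rw [hexp] at h0
  have hfg : f ⬝ᵥ (M⁻¹ *ᵥ f) = f ⬝ᵥ g := rfl
  linarith

lemma smul_posSemidef {N : ℕ} {L : Matrix (Fin N) (Fin N) ℝ} (hL : L.PosSemidef)
    {c : ℝ} (hc : 0 ≤ c) : (c • L).PosSemidef := by
  refine PosSemidef.of_dotProduct_mulVec_nonneg ?_ ?_
  · unfold Matrix.IsHermitian
    rw [conjTranspose_smul, hL.isHermitian]
    simp
  · intro x
    have := hL.dotProduct_mulVec_nonneg x
    simp only [smul_mulVec, dotProduct_smul, star_trivial] at *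
    positivity

/-- Unconditional stability of the Galerkin (multiscale) fully discrete
scheme: for every `n ≥ 1`,
`‖u_msⁿ‖_L² ≤ ‖u_ms⁰‖_L² + (τ/2) Σ_{k=1}^n (fᵏ)ᵀ (C + (τ/2)L)⁻¹ fᵏ`. -/
theorem galerkin_backward_euler_stability (N : ℕ) (hN : 1 ≤ N)
    (C L : Matrix (Fin N) (Fin N) ℝ) (hC : C.PosDef) (hL : L.PosSemidef)
    (V : Submodule ℝ (Fin N → ℝ)) (τ : ℝ) (hτ : 0 < τ)
    (ums : ℕ → Fin N → ℝ) (f : ℕ → Fin N → ℝ)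
    (hmem : ∀ n, ums n ∈ V)
    (hgal : ∀ n : ℕ, 1 ≤ n → ∀ v ∈ V,
      v ⬝ᵥ (C *ᵥ (τ⁻¹ • (ums n - ums (n - 1))) + L *ᵥ ums n - f n) = 0) :
    ∀ n : ℕ, 1 ≤ n →
      ums n ⬝ᵥ (L *ᵥ ums n) ≤
        ums 0 ⬝ᵥ (L *ᵥ ums 0) +
          (τ / 2) * ∑ k ∈ Finset.Icc 1 n, f k ⬝ᵥ ((C + (τ / 2) • L)⁻¹ *ᵥ f k) := by
  have hA : (C + (τ / 2) • L).PosDef :=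
    hC.add_posSemidef (smul_posSemidef hL (by linarith))
  set A := C + (τ / 2) • L with hAdef
  have step : ∀ n : ℕ, 1 ≤ n →
      ums n ⬝ᵥ (L *ᵥ ums n) ≤
        ums (n - 1) ⬝ᵥ (L *ᵥ ums (n - 1)) + (τ / 2) * (f n ⬝ᵥ (A⁻¹ *ᵥ f n)) := by
    intro n hn
    set w := ums n - ums (n - 1) with hwdef
    have hw : w ∈ V := sub_mem (hmem n) (hmem (n - 1))
    have heq := hgal n hn w hw
    rw [← hwdef] at heq
    rw [dotProduct_sub, dotProduct_add, mulVec_smul, dotProduct_smul, smul_eq_mul] at heq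
    have hc1 : ums (n - 1) ⬝ᵥ (L *ᵥ ums n) = ums n ⬝ᵥ (L *ᵥ ums (n - 1)) :=
      herm_symm_dot hL.isHermitian _ _
    have e1 : w ⬝ᵥ (L *ᵥ ums n) =
        ums n ⬝ᵥ (L *ᵥ ums n) - ums n ⬝ᵥ (L *ᵥ ums (n - 1)) := by
      rw [hwdef, sub_dotProduct, hc1]
    have e2 : w ⬝ᵥ (L *ᵥ w) =
        ums n ⬝ᵥ (L *ᵥ ums n) - 2 * (ums n ⬝ᵥ (L *ᵥ ums (n - 1)))
          + ums (n - 1) ⬝ᵥ (L *ᵥ ums (n - 1)) := by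
      rw [hwdef, mulVec_sub, sub_dotProduct, dotProduct_sub, dotProduct_sub, hc1]
      ring
    have eA : w ⬝ᵥ (A *ᵥ w) = w ⬝ᵥ (C *ᵥ w) + (τ / 2) * (w ⬝ᵥ (L *ᵥ w)) := by
      rw [hAdef, add_mulVec, dotProduct_add, smul_mulVec, dotProduct_smul, smul_eq_mul]
    have hy := young_matrix hA ((2 / τ) • w) (f n)
    simp only [smul_dotProduct, dotProduct_smul, mulVec_smul, smul_eq_mul] at hy
    rw [eA, e2] at hy
    rw [e1] at heq
    set a := ums n ⬝ᵥ (L *ᵥ ums n)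
    set b := ums (n - 1) ⬝ᵥ (L *ᵥ ums (n - 1))
    set c1 := ums n ⬝ᵥ (L *ᵥ ums (n - 1))
    set q := w ⬝ᵥ (C *ᵥ w)
    set wf := w ⬝ᵥ f n
    set F := f n ⬝ᵥ (A⁻¹ *ᵥ f n)
    have hτ' : τ ≠ 0 := ne_of_gt hτ
    have hq : q = τ * (wf - a + c1) := by
      field_simp at heq
      linarith
    rw [hq] at hy
    have h2 : 2 * τ * a ≤ 2 * τ * b + τ ^ 2 * F := by
      field_simp at hy
      nlinarith [hy, hτ, mul_pos hτ hτ]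
    nlinarith [h2, hτ, mul_pos hτ hτ]
  intro n hn
  induction n, hn using Nat.le_induction with
  | base =>
      have := step 1 le_rfl
      simpa using this
  | succ n hn ih =>
      have hs := step (n + 1) (by omega)
      simp only [Nat.add_sub_cancel] at hs
      rw [Finset.sum_Icc_succ_top (by omega : 1 ≤ n + 1)]
      calc ums (n + 1) ⬝ᵥ (L *ᵥ ums (n + 1))
          ≤ ums n ⬝ᵥ (L *ᵥ ums n) + (τ / 2) * (f (n+1) ⬝ᵥ (A⁻¹ *ᵥ f (n+1))) := hs
        _ ≤ _ := by linarith [ih]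
end

section
/- Let w : [0,T] → V be continuously differentiable and set e(t) = w(t) − u_ms(t). Then for every t ∈ [0,T] the Céa-type differential inequality holds: d/dt ‖e(t)‖_C² + ‖e(t)‖_L² ≤ ‖w'(t) − u'(t)‖_C² + ‖e(t)‖_C² + ‖w(t) − u(t)‖_L². -/
open Matrix

private lemma young_psd_aux {n : ℕ} (M : Matrix (Fin n) (Fin n) ℝ) (hM : M.PosSemidef)
    (x y : Fin n → ℝ) :
    2 * (x ⬝ᵥ (M *ᵥ y)) ≤ x ⬝ᵥ (M *ᵥ x) + y ⬝ᵥ (M *ᵥ y) := by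
  have hs : Mᵀ = M := by simpa [Matrix.IsSymm] using hM.1
  have hsym : y ⬝ᵥ (M *ᵥ x) = x ⬝ᵥ (M *ᵥ y) := by
    rw [dotProduct_mulVec, dotProduct_comm, ← mulVec_transpose, hs]
  have h0 := hM.dotProduct_mulVec_nonneg (x - y)
  rw [star_trivial, mulVec_sub, dotProduct_sub, sub_dotProduct, sub_dotProduct] at h0
  linarith

/-- Céa-type differential inequality. With `e(t) = w(t) − u_ms(t)`, for every
`t ∈ [0,T]` one has `d/dt ‖e(t)‖_C² + ‖e(t)‖_L² ≤ ‖w'(t) − u'(t)‖_C² + ‖e(t)‖_C² +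
‖w(t) − u(t)‖_L²` (stated for any value `E'` of the derivative of `s ↦ ‖e(s)‖_C²` at `t`
within `[0,T]`). -/
theorem galerkin_cea_differential_inequality (N : ℕ) (hN : 1 ≤ N)
    (C L : Matrix (Fin N) (Fin N) ℝ) (hC : C.PosDef) (hL : L.PosSemidef)
    (V : Submodule ℝ (Fin N → ℝ)) (T : ℝ) (hT : 0 < T)
    (f u u' ums ums' w w' : ℝ → Fin N → ℝ)
    (hf : ContinuousOn f (Set.Icc 0 T))
    (hu' : ContinuousOn u' (Set.Icc 0 T))
    (huderiv : ∀ t ∈ Set.Icc (0 : ℝ) T, HasDerivWithinAt u (u' t) (Set.Icc 0 T) t)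
    (hueq : ∀ t ∈ Set.Icc (0 : ℝ) T, C *ᵥ u' t + L *ᵥ u t = f t)
    (hums' : ContinuousOn ums' (Set.Icc 0 T))
    (humsderiv : ∀ t ∈ Set.Icc (0 : ℝ) T, HasDerivWithinAt ums (ums' t) (Set.Icc 0 T) t)
    (humsmem : ∀ t ∈ Set.Icc (0 : ℝ) T, ums t ∈ V)
    (hgal : ∀ t ∈ Set.Icc (0 : ℝ) T, ∀ v ∈ V,
      v ⬝ᵥ (C *ᵥ ums' t + L *ᵥ ums t - f t) = 0)
    (hw' : ContinuousOn w' (Set.Icc 0 T))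
    (hwderiv : ∀ t ∈ Set.Icc (0 : ℝ) T, HasDerivWithinAt w (w' t) (Set.Icc 0 T) t)
    (hwmem : ∀ t ∈ Set.Icc (0 : ℝ) T, w t ∈ V) :
    ∀ t ∈ Set.Icc (0 : ℝ) T, ∀ E' : ℝ,
      HasDerivWithinAt (fun s => (w s - ums s) ⬝ᵥ (C *ᵥ (w s - ums s)))
        E' (Set.Icc 0 T) t →
      E' + (w t - ums t) ⬝ᵥ (L *ᵥ (w t - ums t)) ≤
        (w' t - u' t) ⬝ᵥ (C *ᵥ (w' t - u' t)) +
          (w t - ums t) ⬝ᵥ (C *ᵥ (w t - ums t)) +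
            (w t - u t) ⬝ᵥ (L *ᵥ (w t - u t)) := by
  intro t ht E' hE'
  -- symmetry of the bilinear forms
  have symC : ∀ x y : Fin N → ℝ, x ⬝ᵥ (C *ᵥ y) = y ⬝ᵥ (C *ᵥ x) := by
    intro x y
    have hs : Cᵀ = C := by simpa [Matrix.IsSymm] using hC.1
    rw [dotProduct_mulVec, dotProduct_comm, ← mulVec_transpose, hs]
  have symL : ∀ x y : Fin N → ℝ, x ⬝ᵥ (L *ᵥ y) = y ⬝ᵥ (L *ᵥ x) := by
    intro x y
    have hs : Lᵀ = L := by simpa [Matrix.IsSymm] using hL.1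
    rw [dotProduct_mulVec, dotProduct_comm, ← mulVec_transpose, hs]
  -- the derivative of the squared C-norm of e
  have hE : HasDerivWithinAt (fun s => w s - ums s) (w' t - ums' t) (Set.Icc 0 T) t :=
    (hwderiv t ht).sub (humsderiv t ht)
  have hcomp := hasDerivWithinAt_pi.mp hE
  have hg : HasDerivWithinAt (fun s => (w s - ums s) ⬝ᵥ (C *ᵥ (w s - ums s)))
      ((w' t - ums' t) ⬝ᵥ (C *ᵥ (w t - ums t)) + (w t - ums t) ⬝ᵥ (C *ᵥ (w' t - ums' t)))
      (Set.Icc 0 T) t := by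
    have H : HasDerivWithinAt
        (fun s => ∑ i, (w s - ums s) i * ∑ j, C i j * (w s - ums s) j)
        (∑ i, ((w' t - ums' t) i * ∑ j, C i j * (w t - ums t) j +
          (w t - ums t) i * ∑ j, C i j * (w' t - ums' t) j)) (Set.Icc 0 T) t := by
      apply HasDerivWithinAt.fun_sum
      intro i _
      exact (hcomp i).mul (HasDerivWithinAt.fun_sum fun j _ => (hcomp j).const_mul (C i j))
    have e1 : (fun s => (w s - ums s) ⬝ᵥ (C *ᵥ (w s - ums s))) =
        fun s => ∑ i, (w s - ums s) i * ∑ j, C i j * (w s - ums s) j := by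
      funext s; simp [dotProduct, mulVec]
    have e2 : (w' t - ums' t) ⬝ᵥ (C *ᵥ (w t - ums t)) + (w t - ums t) ⬝ᵥ (C *ᵥ (w' t - ums' t)) =
        ∑ i, ((w' t - ums' t) i * ∑ j, C i j * (w t - ums t) j +
          (w t - ums t) i * ∑ j, C i j * (w' t - ums' t) j) := by
      simp [dotProduct, mulVec, Finset.sum_add_distrib]
    rw [e1, e2]; exact H
  have hEq : E' = (w' t - ums' t) ⬝ᵥ (C *ᵥ (w t - ums t)) +
      (w t - ums t) ⬝ᵥ (C *ᵥ (w' t - ums' t)) := by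
    have h1 := hE'.derivWithin (uniqueDiffOn_Icc hT t ht)
    have h2 := hg.derivWithin (uniqueDiffOn_Icc hT t ht)
    rw [← h1, ← h2]
  -- Galerkin orthogonality
  have heV : (w t - ums t) ∈ V := Submodule.sub_mem V (hwmem t ht) (humsmem t ht)
  have hg0 := hgal t ht _ heV
  have hu0 : C *ᵥ u' t + L *ᵥ u t = f t := hueq t ht
  have horth : (w t - ums t) ⬝ᵥ (C *ᵥ (u' t - ums' t)) +
      (w t - ums t) ⬝ᵥ (L *ᵥ (u t - ums t)) = 0 := by
    have hvec : C *ᵥ ums' t + L *ᵥ ums t - f t =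
        -(C *ᵥ (u' t - ums' t) + L *ᵥ (u t - ums t)) := by
      rw [← hu0]; simp [mulVec_sub]; abel
    rw [hvec, dotProduct_neg, dotProduct_add, neg_eq_zero] at hg0
    linarith [hg0]
  -- decompositions
  have keyd : (w t - ums t) ⬝ᵥ (C *ᵥ (w' t - ums' t)) =
      (w t - ums t) ⬝ᵥ (C *ᵥ (w' t - u' t)) + (w t - ums t) ⬝ᵥ (C *ᵥ (u' t - ums' t)) := by
    rw [← dotProduct_add, ← mulVec_add]
    congr 2
    abel
  have keyL : (w t - ums t) ⬝ᵥ (L *ᵥ (u t - ums t)) =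
      (w t - ums t) ⬝ᵥ (L *ᵥ (w t - ums t)) - (w t - ums t) ⬝ᵥ (L *ᵥ (w t - u t)) := by
    rw [← dotProduct_sub, ← mulVec_sub]
    congr 2
    abel
  -- Young inequalities
  have youngC : 2 * ((w t - ums t) ⬝ᵥ (C *ᵥ (w' t - u' t))) ≤
      (w t - ums t) ⬝ᵥ (C *ᵥ (w t - ums t)) + (w' t - u' t) ⬝ᵥ (C *ᵥ (w' t - u' t)) :=
    young_psd_aux C hC.posSemidef _ _
  have youngL : 2 * ((w t - ums t) ⬝ᵥ (L *ᵥ (w t - u t))) ≤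
      (w t - ums t) ⬝ᵥ (L *ᵥ (w t - ums t)) + (w t - u t) ⬝ᵥ (L *ᵥ (w t - u t)) :=
    young_psd_aux L hL _ _
  have hsymd := symC (w' t - ums' t) (w t - ums t)
  linarith [hEq, keyd, keyL, horth]
end

section
/- Let w : [0,T] → V be continuously differentiable and set e(t) = w(t) − u_ms(t). Then for every t ∈ [0,T], ‖e(t)‖_C² + ∫_0^t ‖e(s)‖_L² ds ≤ e^t ( ‖e(0)‖_C² + ∫_0^t ( ‖w'(s) − u'(s)‖_C² + ‖w(s) − u(s)‖_L² ) ds ). -/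
open Matrix
open MeasureTheory

lemma gge_symm_dot {n : ℕ} {S : Matrix (Fin n) (Fin n) ℝ} (hS : S.IsHermitian)
    (a b : Fin n → ℝ) : a ⬝ᵥ S *ᵥ b = b ⬝ᵥ S *ᵥ a := by
  have hij : ∀ i j, S j i = S i j := fun i j => by
    conv_lhs => rw [← hS]
    simp [conjTranspose_apply]
  simp only [dotProduct, mulVec, Finset.mul_sum]
  rw [Finset.sum_comm]
  exact Finset.sum_congr rfl fun i _ => Finset.sum_congr rfl fun j _ => by
    rw [hij j i]; ring

lemma gge_psd_nonneg {n : ℕ} {S : Matrix (Fin n) (Fin n) ℝ} (hS : S.PosSemidef)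
    (a : Fin n → ℝ) : 0 ≤ a ⬝ᵥ S *ᵥ a := by
  simpa using hS.dotProduct_mulVec_nonneg a

lemma gge_cauchy {n : ℕ} {S : Matrix (Fin n) (Fin n) ℝ} (hS : S.PosSemidef)
    (a b : Fin n → ℝ) : 2 * (a ⬝ᵥ S *ᵥ b) ≤ a ⬝ᵥ S *ᵥ a + b ⬝ᵥ S *ᵥ b := by
  have h0 := gge_psd_nonneg hS (a - b)
  have hsym := gge_symm_dot hS.1 b a
  simp only [mulVec_sub, dotProduct_sub, sub_dotProduct] at h0
  linarith

lemma gge_quad_deriv {n : ℕ} (S : Matrix (Fin n) (Fin n) ℝ)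
    {E : ℝ → Fin n → ℝ} {E't : Fin n → ℝ} {s : Set ℝ} {t : ℝ}
    (hE : HasDerivWithinAt E E't s t) :
    HasDerivWithinAt (fun τ => E τ ⬝ᵥ S *ᵥ E τ)
      (E't ⬝ᵥ S *ᵥ E t + E t ⬝ᵥ S *ᵥ E't) s t := by
  have hcomp : ∀ i, HasDerivWithinAt (fun τ => E τ i) (E't i) s t :=
    fun i => hasDerivWithinAt_pi.1 hE i
  have key : HasDerivWithinAt (fun τ => ∑ i, E τ i * ∑ j, S i j * E τ j)
      (∑ i, (E't i * ∑ j, S i j * E t j + E t i * ∑ j, S i j * E't j)) s t := by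
    apply HasDerivWithinAt.fun_sum
    intro i _
    exact (hcomp i).mul (HasDerivWithinAt.fun_sum fun j _ => (hcomp j).const_mul _)
  have h1 : (fun τ => E τ ⬝ᵥ S *ᵥ E τ) = fun τ => ∑ i, E τ i * ∑ j, S i j * E τ j := by
    funext τ; simp [dotProduct, mulVec]
  have h2 : E't ⬝ᵥ S *ᵥ E t + E t ⬝ᵥ S *ᵥ E't
      = ∑ i, (E't i * ∑ j, S i j * E t j + E t i * ∑ j, S i j * E't j) := by
    simp [dotProduct, mulVec, Finset.sum_add_distrib]
  rw [h1, h2]; exact key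

lemma gge_quad_cont {n : ℕ} (S : Matrix (Fin n) (Fin n) ℝ)
    {a b : ℝ → Fin n → ℝ} {s : Set ℝ}
    (ha : ContinuousOn a s) (hb : ContinuousOn b s) :
    ContinuousOn (fun τ => a τ ⬝ᵥ S *ᵥ b τ) s := by
  simp only [dotProduct, mulVec]
  apply continuousOn_finset_sum
  intro i _
  exact ((continuous_apply i).comp_continuousOn ha).mul
    (continuousOn_finset_sum _ fun j _ =>
      (continuousOn_const.mul ((continuous_apply j).comp_continuousOn hb)))

lemma gge_ftc {f : ℝ → ℝ} {T : ℝ} (hf : ContinuousOn f (Set.Icc 0 T))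
    {x : ℝ} (hx : x ∈ Set.Icc 0 T) :
    HasDerivWithinAt (fun τ => ∫ s in (0:ℝ)..τ, f s) (f x) (Set.Icc 0 T) x := by
  haveI : Fact (x ∈ Set.Icc (0:ℝ) T) := ⟨hx⟩
  have hsub : Set.uIcc (0:ℝ) x ⊆ Set.Icc 0 T := by
    rw [Set.uIcc_of_le hx.1]; exact Set.Icc_subset_Icc le_rfl hx.2
  exact intervalIntegral.integral_hasDerivWithinAt_right
    ((hf.mono hsub).intervalIntegrable)
    (hf.stronglyMeasurableAtFilter_nhdsWithin measurableSet_Icc x)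
    (hf x hx)

lemma gge_core {T : ℝ} (hT : 0 < T) {h h' k g : ℝ → ℝ}
    (hh : ∀ x ∈ Set.Icc (0:ℝ) T, HasDerivWithinAt h (h' x) (Set.Icc 0 T) x)
    (hkc : ContinuousOn k (Set.Icc 0 T)) (hgc : ContinuousOn g (Set.Icc 0 T))
    (hk0 : ∀ x ∈ Set.Icc (0:ℝ) T, 0 ≤ k x) (hg0 : ∀ x ∈ Set.Icc (0:ℝ) T, 0 ≤ g x)
    (hkey : ∀ x ∈ Set.Icc (0:ℝ) T, h' x + k x ≤ h x + g x) :
    ∀ t ∈ Set.Icc (0:ℝ) T,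
      h t + (∫ s in (0:ℝ)..t, k s) ≤ Real.exp t * (h 0 + ∫ s in (0:ℝ)..t, g s) := by
  have hegc : ContinuousOn (fun s => Real.exp (-s) * g s) (Set.Icc 0 T) :=
    ((Real.continuous_exp.comp continuous_neg).continuousOn).mul hgc
  set Φ : ℝ → ℝ := fun s =>
    Real.exp (-s) * (h s + ∫ σ in (0:ℝ)..s, k σ) - ∫ σ in (0:ℝ)..s, Real.exp (-σ) * g σ with hΦ
  set Φ' : ℝ → ℝ := fun x =>
    Real.exp (-x) * (-1) * (h x + ∫ σ in (0:ℝ)..x, k σ)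
      + Real.exp (-x) * (h' x + k x) - Real.exp (-x) * g x with hΦ'
  have hΦd : ∀ x ∈ Set.Icc (0:ℝ) T, HasDerivWithinAt Φ (Φ' x) (Set.Icc 0 T) x := by
    intro x hx
    have hexp : HasDerivWithinAt (fun s => Real.exp (-s)) (Real.exp (-x) * (-1))
        (Set.Icc 0 T) x :=
      ((Real.hasDerivAt_exp (-x)).comp x (hasDerivAt_neg x)).hasDerivWithinAt
    exact (hexp.mul ((hh x hx).add (gge_ftc hkc hx))).sub (gge_ftc hegc hx)
  have hanti : AntitoneOn Φ (Set.Icc 0 T) := by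
    apply antitoneOn_of_hasDerivWithinAt_nonpos (convex_Icc 0 T)
      (fun x hx => (hΦd x hx).continuousWithinAt)
      (fun x hx => (hΦd x (interior_subset hx)).mono interior_subset)
    intro x hx
    have hx' : x ∈ Set.Icc (0:ℝ) T := interior_subset hx
    have hK0 : 0 ≤ ∫ σ in (0:ℝ)..x, k σ :=
      intervalIntegral.integral_nonneg hx'.1 (fun σ hσ => hk0 σ ⟨hσ.1, hσ.2.trans hx'.2⟩)
    have hkx := hkey x hx'
    have hgx := hg0 x hx'
    show Φ' x ≤ 0
    simp only [hΦ']
    have hre : Real.exp (-x) * (-1) * (h x + ∫ σ in (0:ℝ)..x, k σ)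
        + Real.exp (-x) * (h' x + k x) - Real.exp (-x) * g x
        = Real.exp (-x) * ((h' x + k x) - (h x + ∫ σ in (0:ℝ)..x, k σ) - g x) := by ring
    rw [hre]
    exact mul_nonpos_of_nonneg_of_nonpos (Real.exp_pos (-x)).le (by linarith)
  intro t ht
  have hle : Φ t ≤ Φ 0 := hanti ⟨le_rfl, hT.le⟩ ht ht.1
  have hΦ0 : Φ 0 = h 0 := by simp [hΦ]
  have hsub : Set.uIcc (0:ℝ) t ⊆ Set.Icc 0 T := by
    rw [Set.uIcc_of_le ht.1]; exact Set.Icc_subset_Icc le_rfl ht.2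
  have hint : (∫ σ in (0:ℝ)..t, Real.exp (-σ) * g σ) ≤ ∫ σ in (0:ℝ)..t, g σ := by
    apply intervalIntegral.integral_mono_on ht.1
      ((hegc.mono hsub).intervalIntegrable) ((hgc.mono hsub).intervalIntegrable)
    intro σ hσ
    have hσ' : σ ∈ Set.Icc (0:ℝ) T := ⟨hσ.1, hσ.2.trans ht.2⟩
    have h1 : Real.exp (-σ) ≤ 1 := Real.exp_le_one_iff.2 (neg_nonpos.2 hσ.1)
    exact mul_le_of_le_one_left (hg0 σ hσ') h1
  rw [hΦ0] at hle
  rw [hΦ] at hle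
  simp only at hle
  have h1 : Real.exp (-t) * (h t + ∫ σ in (0:ℝ)..t, k σ) ≤ h 0 + ∫ σ in (0:ℝ)..t, g σ := by
    linarith
  calc h t + (∫ s in (0:ℝ)..t, k s)
      = Real.exp t * (Real.exp (-t) * (h t + ∫ s in (0:ℝ)..t, k s)) := by
        rw [← mul_assoc, ← Real.exp_add, add_neg_cancel, Real.exp_zero, one_mul]
    _ ≤ Real.exp t * (h 0 + ∫ s in (0:ℝ)..t, g s) :=
        mul_le_mul_of_nonneg_left h1 (Real.exp_pos t).le


/-- Gronwall-type estimate. With `e(t) = w(t) − u_ms(t)`, for every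
`t ∈ [0,T]`:
`‖e(t)‖_C² + ∫_0^t ‖e(s)‖_L² ds ≤ e^t (‖e(0)‖_C² + ∫_0^t (‖w'(s) − u'(s)‖_C² +
‖w(s) − u(s)‖_L²) ds)`. -/
theorem galerkin_gronwall_estimate (N : ℕ) (hN : 1 ≤ N)
    (C L : Matrix (Fin N) (Fin N) ℝ) (hC : C.PosDef) (hL : L.PosSemidef)
    (V : Submodule ℝ (Fin N → ℝ)) (T : ℝ) (hT : 0 < T)
    (f u u' ums ums' w w' : ℝ → Fin N → ℝ)
    (hf : ContinuousOn f (Set.Icc 0 T))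
    (hu' : ContinuousOn u' (Set.Icc 0 T))
    (huderiv : ∀ t ∈ Set.Icc (0 : ℝ) T, HasDerivWithinAt u (u' t) (Set.Icc 0 T) t)
    (hueq : ∀ t ∈ Set.Icc (0 : ℝ) T, C *ᵥ u' t + L *ᵥ u t = f t)
    (hums' : ContinuousOn ums' (Set.Icc 0 T))
    (humsderiv : ∀ t ∈ Set.Icc (0 : ℝ) T, HasDerivWithinAt ums (ums' t) (Set.Icc 0 T) t)
    (humsmem : ∀ t ∈ Set.Icc (0 : ℝ) T, ums t ∈ V)
    (hgal : ∀ t ∈ Set.Icc (0 : ℝ) T, ∀ v ∈ V,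
      v ⬝ᵥ (C *ᵥ ums' t + L *ᵥ ums t - f t) = 0)
    (hw' : ContinuousOn w' (Set.Icc 0 T))
    (hwderiv : ∀ t ∈ Set.Icc (0 : ℝ) T, HasDerivWithinAt w (w' t) (Set.Icc 0 T) t)
    (hwmem : ∀ t ∈ Set.Icc (0 : ℝ) T, w t ∈ V) :
    ∀ t ∈ Set.Icc (0 : ℝ) T,
      (w t - ums t) ⬝ᵥ (C *ᵥ (w t - ums t)) +
          (∫ s in (0 : ℝ)..t, (w s - ums s) ⬝ᵥ (L *ᵥ (w s - ums s))) ≤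
        Real.exp t *
          ((w 0 - ums 0) ⬝ᵥ (C *ᵥ (w 0 - ums 0)) +
            ∫ s in (0 : ℝ)..t,
              ((w' s - u' s) ⬝ᵥ (C *ᵥ (w' s - u' s)) +
                (w s - u s) ⬝ᵥ (L *ᵥ (w s - u s)))) := by
  have hwc : ContinuousOn w (Set.Icc 0 T) :=
    fun x hx => (hwderiv x hx).continuousWithinAt
  have humsc : ContinuousOn ums (Set.Icc 0 T) :=
    fun x hx => (humsderiv x hx).continuousWithinAt
  have huc : ContinuousOn u (Set.Icc 0 T) :=
    fun x hx => (huderiv x hx).continuousWithinAt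
  have hEc : ContinuousOn (fun s => w s - ums s) (Set.Icc 0 T) := hwc.sub humsc
  have hkc : ContinuousOn (fun s => (w s - ums s) ⬝ᵥ (L *ᵥ (w s - ums s))) (Set.Icc 0 T) :=
    gge_quad_cont L hEc hEc
  have hgc : ContinuousOn (fun s => (w' s - u' s) ⬝ᵥ (C *ᵥ (w' s - u' s)) +
      (w s - u s) ⬝ᵥ (L *ᵥ (w s - u s))) (Set.Icc 0 T) :=
    (gge_quad_cont C (hw'.sub hu') (hw'.sub hu')).add
      (gge_quad_cont L (hwc.sub huc) (hwc.sub huc))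
  have hh : ∀ x ∈ Set.Icc (0:ℝ) T,
      HasDerivWithinAt (fun s => (w s - ums s) ⬝ᵥ (C *ᵥ (w s - ums s)))
        ((w' x - ums' x) ⬝ᵥ (C *ᵥ (w x - ums x)) +
          (w x - ums x) ⬝ᵥ (C *ᵥ (w' x - ums' x))) (Set.Icc 0 T) x :=
    fun x hx => gge_quad_deriv C ((hwderiv x hx).sub (humsderiv x hx))
  have hk0 : ∀ x ∈ Set.Icc (0:ℝ) T, 0 ≤ (w x - ums x) ⬝ᵥ (L *ᵥ (w x - ums x)) :=
    fun x _ => gge_psd_nonneg hL _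
  have hg0 : ∀ x ∈ Set.Icc (0:ℝ) T, 0 ≤ (w' x - u' x) ⬝ᵥ (C *ᵥ (w' x - u' x)) +
      (w x - u x) ⬝ᵥ (L *ᵥ (w x - u x)) :=
    fun x _ => add_nonneg (gge_psd_nonneg hC.posSemidef _) (gge_psd_nonneg hL _)
  have hkey : ∀ x ∈ Set.Icc (0:ℝ) T,
      ((w' x - ums' x) ⬝ᵥ (C *ᵥ (w x - ums x)) +
        (w x - ums x) ⬝ᵥ (C *ᵥ (w' x - ums' x))) +
        (w x - ums x) ⬝ᵥ (L *ᵥ (w x - ums x)) ≤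
      (w x - ums x) ⬝ᵥ (C *ᵥ (w x - ums x)) +
        ((w' x - u' x) ⬝ᵥ (C *ᵥ (w' x - u' x)) +
          (w x - u x) ⬝ᵥ (L *ᵥ (w x - u x))) := by
    intro x hx
    have hsym : (w' x - ums' x) ⬝ᵥ C *ᵥ (w x - ums x)
        = (w x - ums x) ⬝ᵥ C *ᵥ (w' x - ums' x) := gge_symm_dot hC.1 _ _
    have hmem : w x - ums x ∈ V := V.sub_mem (hwmem x hx) (humsmem x hx)
    have hgal0 := hgal x hx _ hmem
    rw [← hueq x hx] at hgal0
    have hid : (w x - ums x) ⬝ᵥ C *ᵥ (w' x - ums' x) + (w x - ums x) ⬝ᵥ L *ᵥ (w x - ums x)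
        = (w x - ums x) ⬝ᵥ C *ᵥ (w' x - u' x) + (w x - ums x) ⬝ᵥ L *ᵥ (w x - u x) := by
      simp only [mulVec_sub, dotProduct_sub, dotProduct_add, mulVec_add] at hgal0 ⊢
      linarith
    have hc1 := gge_cauchy hC.posSemidef (w x - ums x) (w' x - u' x)
    have hc2 := gge_cauchy hL (w x - ums x) (w x - u x)
    linarith
  exact gge_core hT hh hkc hgc hk0 hg0 hkey
end

section
/- For every continuously differentiable w : [0,T] → V and every t ∈ [0,T], the error of the Galerkin (multiscale) semi-discrete solution satisfies ‖u(t) − u_ms(t)‖_C² + ∫_0^t ‖u(s) − u_ms(s)‖_L² ds ≤ 2 e^t ( ‖w(0) − u_ms(0)‖_C² + ∫_0^t ( ‖w'(s) − u'(s)‖_C² + ‖w(s) − u(s)‖_L² ) ds ) + 2 ‖w(t) − u(t)‖_C² + 2 ∫_0^t ‖w(s) − u(s)‖_L² ds. -/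
open Matrix

lemma mydot_symm {N : ℕ} (M : Matrix (Fin N) (Fin N) ℝ) (hM : M.IsHermitian)
    (a b : Fin N → ℝ) : a ⬝ᵥ (M *ᵥ b) = b ⬝ᵥ (M *ᵥ a) := by
  simp only [dotProduct, Matrix.mulVec, Finset.mul_sum]
  rw [Finset.sum_comm]
  refine Finset.sum_congr rfl fun i _ => Finset.sum_congr rfl fun j _ => ?_
  have h := hM.apply j i
  simp only [star_trivial] at h
  rw [← h]; ring

lemma mypsd_two_mul_le {N : ℕ} {M : Matrix (Fin N) (Fin N) ℝ} (hM : M.PosSemidef)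
    (x y : Fin N → ℝ) :
    2 * (x ⬝ᵥ (M *ᵥ y)) ≤ x ⬝ᵥ (M *ᵥ x) + y ⬝ᵥ (M *ᵥ y) := by
  have h0 := hM.dotProduct_mulVec_nonneg (x - y)
  simp only [star_trivial, Matrix.mulVec_sub, dotProduct_sub, sub_dotProduct] at h0
  have hs := mydot_symm M hM.1 x y
  linarith

lemma mypsd_nonneg {N : ℕ} {M : Matrix (Fin N) (Fin N) ℝ} (hM : M.PosSemidef)
    (x : Fin N → ℝ) : 0 ≤ x ⬝ᵥ (M *ᵥ x) := by
  have := hM.dotProduct_mulVec_nonneg x; simpa using this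

lemma mypsd_sub_le {N : ℕ} {M : Matrix (Fin N) (Fin N) ℝ} (hM : M.PosSemidef)
    (x y : Fin N → ℝ) :
    (x - y) ⬝ᵥ (M *ᵥ (x - y)) ≤ 2 * (x ⬝ᵥ (M *ᵥ x)) + 2 * (y ⬝ᵥ (M *ᵥ y)) := by
  have h3 := mypsd_two_mul_le hM x (-y)
  simp only [Matrix.mulVec_neg, dotProduct_neg, neg_dotProduct] at h3
  have hs := mydot_symm M hM.1 x y
  simp only [Matrix.mulVec_sub, dotProduct_sub, sub_dotProduct]
  linarith

lemma myquad_hasDerivWithinAt {N : ℕ} (M : Matrix (Fin N) (Fin N) ℝ)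
    {v : ℝ → Fin N → ℝ} {v' : Fin N → ℝ} {s : Set ℝ} {t : ℝ}
    (h : HasDerivWithinAt v v' s t) :
    HasDerivWithinAt (fun τ => v τ ⬝ᵥ (M *ᵥ v τ))
      (v' ⬝ᵥ (M *ᵥ v t) + v t ⬝ᵥ (M *ᵥ v')) s t := by
  have hc : ∀ i, HasDerivWithinAt (fun τ => v τ i) (v' i) s t :=
    fun i => hasDerivWithinAt_pi.1 h i
  have H : HasDerivWithinAt (fun τ => ∑ i, v τ i * ∑ j, M i j * v τ j)
      (∑ i, (v' i * ∑ j, M i j * v t j + v t i * ∑ j, M i j * v' j)) s t := by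
    refine HasDerivWithinAt.fun_sum fun i _ => ?_
    exact (hc i).mul (HasDerivWithinAt.fun_sum fun j _ => (hc j).const_mul (M i j))
  have heq : (fun τ => v τ ⬝ᵥ (M *ᵥ v τ)) = fun τ => ∑ i, v τ i * ∑ j, M i j * v τ j := by
    funext τ; simp [dotProduct, Matrix.mulVec]
  have hval : v' ⬝ᵥ (M *ᵥ v t) + v t ⬝ᵥ (M *ᵥ v')
      = ∑ i, (v' i * ∑ j, M i j * v t j + v t i * ∑ j, M i j * v' j) := by
    simp [dotProduct, Matrix.mulVec, Finset.sum_add_distrib]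
  rw [heq, hval]; exact H

lemma myquad_continuousOn {N : ℕ} (M : Matrix (Fin N) (Fin N) ℝ)
    {v : ℝ → Fin N → ℝ} {s : Set ℝ} (h : ContinuousOn v s) :
    ContinuousOn (fun τ => v τ ⬝ᵥ (M *ᵥ v τ)) s := by
  have hc : ∀ i, ContinuousOn (fun τ => v τ i) s :=
    fun i => (continuous_apply i).comp_continuousOn h
  have : ContinuousOn (fun τ => ∑ i, v τ i * ∑ j, M i j * v τ j) s := by
    refine continuousOn_finset_sum _ fun i _ => (hc i).mul ?_
    exact continuousOn_finset_sum _ fun j _ => (continuousOn_const).mul (hc j)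
  refine this.congr fun τ _ => ?_
  simp [dotProduct, Matrix.mulVec]

lemma myftc {T : ℝ} {g : ℝ → ℝ} (hg : ContinuousOn g (Set.Icc 0 T)) {t : ℝ}
    (ht : t ∈ Set.Icc 0 T) :
    HasDerivWithinAt (fun τ => ∫ s in (0:ℝ)..τ, g s) (g t) (Set.Icc 0 T) t := by
  haveI : Fact (t ∈ Set.Icc (0:ℝ) T) := ⟨ht⟩
  have hint : IntervalIntegrable g MeasureTheory.volume 0 t := by
    apply ContinuousOn.intervalIntegrable
    apply hg.mono
    rw [Set.uIcc_of_le ht.1]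
    exact Set.Icc_subset_Icc le_rfl ht.2
  exact intervalIntegral.integral_hasDerivWithinAt_right hint
    (hg.stronglyMeasurableAtFilter_nhdsWithin measurableSet_Icc t) (hg t ht)


/-- Error estimate of the Galerkin (multiscale) semi-discrete solution:
for every continuously differentiable `w : [0,T] → V` and every `t ∈ [0,T]`,
`‖u(t) − u_ms(t)‖_C² + ∫_0^t ‖u(s) − u_ms(s)‖_L² ds ≤
2 e^t (‖w(0) − u_ms(0)‖_C² + ∫_0^t (‖w'(s) − u'(s)‖_C² + ‖w(s) − u(s)‖_L²) ds)
+ 2 ‖w(t) − u(t)‖_C² + 2 ∫_0^t ‖w(s) − u(s)‖_L² ds`. -/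
theorem galerkin_semidiscrete_error_estimate (N : ℕ) (hN : 1 ≤ N)
    (C L : Matrix (Fin N) (Fin N) ℝ) (hC : C.PosDef) (hL : L.PosSemidef)
    (V : Submodule ℝ (Fin N → ℝ)) (T : ℝ) (hT : 0 < T)
    (f u u' ums ums' : ℝ → Fin N → ℝ)
    (hf : ContinuousOn f (Set.Icc 0 T))
    (hu' : ContinuousOn u' (Set.Icc 0 T))
    (huderiv : ∀ t ∈ Set.Icc (0 : ℝ) T, HasDerivWithinAt u (u' t) (Set.Icc 0 T) t)
    (hueq : ∀ t ∈ Set.Icc (0 : ℝ) T, C *ᵥ u' t + L *ᵥ u t = f t)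
    (hums' : ContinuousOn ums' (Set.Icc 0 T))
    (humsderiv : ∀ t ∈ Set.Icc (0 : ℝ) T, HasDerivWithinAt ums (ums' t) (Set.Icc 0 T) t)
    (humsmem : ∀ t ∈ Set.Icc (0 : ℝ) T, ums t ∈ V)
    (hgal : ∀ t ∈ Set.Icc (0 : ℝ) T, ∀ v ∈ V,
      v ⬝ᵥ (C *ᵥ ums' t + L *ᵥ ums t - f t) = 0) :
    ∀ (w w' : ℝ → Fin N → ℝ),
      ContinuousOn w' (Set.Icc 0 T) →
      (∀ t ∈ Set.Icc (0 : ℝ) T, HasDerivWithinAt w (w' t) (Set.Icc 0 T) t) →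
      (∀ t ∈ Set.Icc (0 : ℝ) T, w t ∈ V) →
      ∀ t ∈ Set.Icc (0 : ℝ) T,
        (u t - ums t) ⬝ᵥ (C *ᵥ (u t - ums t)) +
            (∫ s in (0 : ℝ)..t, (u s - ums s) ⬝ᵥ (L *ᵥ (u s - ums s))) ≤
          2 * Real.exp t *
              ((w 0 - ums 0) ⬝ᵥ (C *ᵥ (w 0 - ums 0)) +
                ∫ s in (0 : ℝ)..t,
                  ((w' s - u' s) ⬝ᵥ (C *ᵥ (w' s - u' s)) +
                    (w s - u s) ⬝ᵥ (L *ᵥ (w s - u s)))) +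
            2 * ((w t - u t) ⬝ᵥ (C *ᵥ (w t - u t))) +
              2 * ∫ s in (0 : ℝ)..t, (w s - u s) ⬝ᵥ (L *ᵥ (w s - u s)) := by
  intro w w' hw'c hwd hwV t ht
  obtain ⟨ht0, htT⟩ := ht
  have ht : t ∈ Set.Icc (0:ℝ) T := ⟨ht0, htT⟩
  have h0T : (0:ℝ) ∈ Set.Icc (0:ℝ) T := ⟨le_refl 0, hT.le⟩
  -- continuity of base functions
  have hu_c : ContinuousOn u (Set.Icc 0 T) := fun s hs => (huderiv s hs).continuousWithinAt
  have hums_c : ContinuousOn ums (Set.Icc 0 T) := fun s hs => (humsderiv s hs).continuousWithinAt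
  have hw_c : ContinuousOn w (Set.Icc 0 T) := fun s hs => (hwd s hs).continuousWithinAt
  -- continuity of quadratic forms
  have hEL_c : ContinuousOn (fun s => (w s - ums s) ⬝ᵥ (L *ᵥ (w s - ums s))) (Set.Icc 0 T) :=
    myquad_continuousOn L (hw_c.sub hums_c)
  have hRL_c : ContinuousOn (fun s => (w s - u s) ⬝ᵥ (L *ᵥ (w s - u s))) (Set.Icc 0 T) :=
    myquad_continuousOn L (hw_c.sub hu_c)
  have hG_c : ContinuousOn (fun s => (w' s - u' s) ⬝ᵥ (C *ᵥ (w' s - u' s)) +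
      (w s - u s) ⬝ᵥ (L *ᵥ (w s - u s))) (Set.Icc 0 T) :=
    (myquad_continuousOn C (hw'c.sub hu')).add hRL_c
  have hexpG_c : ContinuousOn (fun s => Real.exp (-s) * ((w' s - u' s) ⬝ᵥ (C *ᵥ (w' s - u' s)) +
      (w s - u s) ⬝ᵥ (L *ᵥ (w s - u s)))) (Set.Icc 0 T) :=
    ((Real.continuous_exp.comp continuous_neg).continuousOn).mul hG_c
  have hUL_c : ContinuousOn (fun s => (u s - ums s) ⬝ᵥ (L *ᵥ (u s - ums s))) (Set.Icc 0 T) :=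
    myquad_continuousOn L (hu_c.sub hums_c)
  -- integrability on [0,t]
  have hsub : Set.uIcc (0:ℝ) t ⊆ Set.Icc 0 T := by
    rw [Set.uIcc_of_le ht0]; exact Set.Icc_subset_Icc le_rfl htT
  have intEL : IntervalIntegrable (fun s => (w s - ums s) ⬝ᵥ (L *ᵥ (w s - ums s)))
      MeasureTheory.volume 0 t := (hEL_c.mono hsub).intervalIntegrable
  have intRL : IntervalIntegrable (fun s => (w s - u s) ⬝ᵥ (L *ᵥ (w s - u s)))
      MeasureTheory.volume 0 t := (hRL_c.mono hsub).intervalIntegrable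
  have intG : IntervalIntegrable (fun s => (w' s - u' s) ⬝ᵥ (C *ᵥ (w' s - u' s)) +
      (w s - u s) ⬝ᵥ (L *ᵥ (w s - u s))) MeasureTheory.volume 0 t :=
    (hG_c.mono hsub).intervalIntegrable
  have intexpG : IntervalIntegrable (fun s => Real.exp (-s) *
      ((w' s - u' s) ⬝ᵥ (C *ᵥ (w' s - u' s)) + (w s - u s) ⬝ᵥ (L *ᵥ (w s - u s))))
      MeasureTheory.volume 0 t := (hexpG_c.mono hsub).intervalIntegrable
  have intUL : IntervalIntegrable (fun s => (u s - ums s) ⬝ᵥ (L *ᵥ (u s - ums s)))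
      MeasureTheory.volume 0 t := (hUL_c.mono hsub).intervalIntegrable
  -- the key pointwise estimate
  have hkey : ∀ x ∈ Set.Icc (0:ℝ) T,
      (w' x - ums' x) ⬝ᵥ (C *ᵥ (w x - ums x)) + (w x - ums x) ⬝ᵥ (C *ᵥ (w' x - ums' x)) +
        (w x - ums x) ⬝ᵥ (L *ᵥ (w x - ums x)) ≤
      ((w x - ums x) ⬝ᵥ (C *ᵥ (w x - ums x)) +
        ∫ s in (0:ℝ)..x, (w s - ums s) ⬝ᵥ (L *ᵥ (w s - ums s))) +
      ((w' x - u' x) ⬝ᵥ (C *ᵥ (w' x - u' x)) + (w x - u x) ⬝ᵥ (L *ᵥ (w x - u x))) := by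
    intro x hx
    have hv : w x - ums x ∈ V := Submodule.sub_mem V (hwV x hx) (humsmem x hx)
    have h1 := hgal x hx (w x - ums x) hv
    rw [← hueq x hx] at h1
    have hsymC := mydot_symm C hC.posSemidef.1 (w' x - ums' x) (w x - ums x)
    have hCe := mypsd_two_mul_le hC.posSemidef (w x - ums x) (w' x - u' x)
    have hLe := mypsd_two_mul_le hL (w x - ums x) (w x - u x)
    have hint_nonneg : 0 ≤ ∫ s in (0:ℝ)..x, (w s - ums s) ⬝ᵥ (L *ᵥ (w s - ums s)) :=
      intervalIntegral.integral_nonneg hx.1 (fun s _ => mypsd_nonneg hL _)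
    set I := ∫ s in (0:ℝ)..x, (w s - ums s) ⬝ᵥ (L *ᵥ (w s - ums s)) with hI
    clear_value I
    simp only [Matrix.mulVec_sub, dotProduct_sub, dotProduct_add, Matrix.mulVec_add,
      sub_dotProduct] at h1 hsymC hCe hLe ⊢
    linarith
  -- the auxiliary function ψ is antitone on [0,T]
  have hpsi_anti : AntitoneOn (fun s => Real.exp (-s) *
      ((w s - ums s) ⬝ᵥ (C *ᵥ (w s - ums s)) +
        ∫ x in (0:ℝ)..s, (w x - ums x) ⬝ᵥ (L *ᵥ (w x - ums x))) -
      ∫ x in (0:ℝ)..s, Real.exp (-x) * ((w' x - u' x) ⬝ᵥ (C *ᵥ (w' x - u' x)) +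
        (w x - u x) ⬝ᵥ (L *ᵥ (w x - u x)))) (Set.Icc 0 T) := by
    have hphi_d : ∀ x ∈ Set.Icc (0:ℝ) T,
        HasDerivWithinAt (fun s => (w s - ums s) ⬝ᵥ (C *ᵥ (w s - ums s)) +
          ∫ y in (0:ℝ)..s, (w y - ums y) ⬝ᵥ (L *ᵥ (w y - ums y)))
        ((w' x - ums' x) ⬝ᵥ (C *ᵥ (w x - ums x)) + (w x - ums x) ⬝ᵥ (C *ᵥ (w' x - ums' x)) +
          (w x - ums x) ⬝ᵥ (L *ᵥ (w x - ums x))) (Set.Icc 0 T) x := fun x hx =>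
      (myquad_hasDerivWithinAt C ((hwd x hx).sub (humsderiv x hx))).add (myftc hEL_c hx)
    have hexp_d : ∀ x : ℝ, HasDerivAt (fun s : ℝ => Real.exp (-s)) (Real.exp (-x) * (-1)) x :=
      fun x => (Real.hasDerivAt_exp (-x)).comp x ((hasDerivAt_id x).neg)
    have hpsi_d : ∀ x ∈ Set.Icc (0:ℝ) T,
        HasDerivWithinAt (fun s => Real.exp (-s) *
          ((w s - ums s) ⬝ᵥ (C *ᵥ (w s - ums s)) +
            ∫ y in (0:ℝ)..s, (w y - ums y) ⬝ᵥ (L *ᵥ (w y - ums y))) -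
          ∫ y in (0:ℝ)..s, Real.exp (-y) * ((w' y - u' y) ⬝ᵥ (C *ᵥ (w' y - u' y)) +
            (w y - u y) ⬝ᵥ (L *ᵥ (w y - u y))))
        (Real.exp (-x) * (-1) * ((w x - ums x) ⬝ᵥ (C *ᵥ (w x - ums x)) +
            ∫ y in (0:ℝ)..x, (w y - ums y) ⬝ᵥ (L *ᵥ (w y - ums y))) +
          Real.exp (-x) * ((w' x - ums' x) ⬝ᵥ (C *ᵥ (w x - ums x)) +
            (w x - ums x) ⬝ᵥ (C *ᵥ (w' x - ums' x)) +
            (w x - ums x) ⬝ᵥ (L *ᵥ (w x - ums x))) -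
          Real.exp (-x) * ((w' x - u' x) ⬝ᵥ (C *ᵥ (w' x - u' x)) +
            (w x - u x) ⬝ᵥ (L *ᵥ (w x - u x)))) (Set.Icc 0 T) x := fun x hx =>
      (((hexp_d x).hasDerivWithinAt.mul (hphi_d x hx)).sub (myftc hexpG_c hx))
    refine antitoneOn_of_hasDerivWithinAt_nonpos (f' := fun x =>
        Real.exp (-x) * (-1) * ((w x - ums x) ⬝ᵥ (C *ᵥ (w x - ums x)) +
            ∫ y in (0:ℝ)..x, (w y - ums y) ⬝ᵥ (L *ᵥ (w y - ums y))) +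
          Real.exp (-x) * ((w' x - ums' x) ⬝ᵥ (C *ᵥ (w x - ums x)) +
            (w x - ums x) ⬝ᵥ (C *ᵥ (w' x - ums' x)) +
            (w x - ums x) ⬝ᵥ (L *ᵥ (w x - ums x))) -
          Real.exp (-x) * ((w' x - u' x) ⬝ᵥ (C *ᵥ (w' x - u' x)) +
            (w x - u x) ⬝ᵥ (L *ᵥ (w x - u x)))) (convex_Icc 0 T)
      (fun x hx => ((hpsi_d x hx).continuousWithinAt)) (fun x hx => ?_) (fun x hx => ?_)
    · rw [interior_Icc] at hx ⊢
      exact (hpsi_d x (Set.Ioo_subset_Icc_self hx)).mono Set.Ioo_subset_Icc_self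
    · rw [interior_Icc] at hx
      have hk := hkey x (Set.Ioo_subset_Icc_self hx)
      have he : (0:ℝ) < Real.exp (-x) := Real.exp_pos _
      beta_reduce
      nlinarith [hk, he]
  -- evaluate ψ at t and 0
  have h01 := hpsi_anti h0T ht ht0
  simp only [intervalIntegral.integral_same, neg_zero, Real.exp_zero, one_mul, add_zero,
    sub_zero] at h01
  -- ∫ exp(-s) G ≤ ∫ G
  have hmono2 : (∫ s in (0:ℝ)..t, Real.exp (-s) *
        ((w' s - u' s) ⬝ᵥ (C *ᵥ (w' s - u' s)) + (w s - u s) ⬝ᵥ (L *ᵥ (w s - u s)))) ≤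
      ∫ s in (0:ℝ)..t, ((w' s - u' s) ⬝ᵥ (C *ᵥ (w' s - u' s)) +
        (w s - u s) ⬝ᵥ (L *ᵥ (w s - u s))) := by
    refine intervalIntegral.integral_mono_on ht0 intexpG intG (fun s hs => ?_)
    have hg0 : 0 ≤ (w' s - u' s) ⬝ᵥ (C *ᵥ (w' s - u' s)) +
        (w s - u s) ⬝ᵥ (L *ᵥ (w s - u s)) :=
      add_nonneg (mypsd_nonneg hC.posSemidef _) (mypsd_nonneg hL _)
    have he1 : Real.exp (-s) ≤ 1 := Real.exp_le_one_iff.2 (neg_nonpos.2 hs.1)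
    nlinarith [Real.exp_pos (-s)]
  -- Gronwall conclusion: φ t ≤ exp t * A
  have h2 : Real.exp (-t) * ((w t - ums t) ⬝ᵥ (C *ᵥ (w t - ums t)) +
      ∫ x in (0:ℝ)..t, (w x - ums x) ⬝ᵥ (L *ᵥ (w x - ums x))) ≤
      (w 0 - ums 0) ⬝ᵥ (C *ᵥ (w 0 - ums 0)) +
      ∫ s in (0:ℝ)..t, ((w' s - u' s) ⬝ᵥ (C *ᵥ (w' s - u' s)) +
        (w s - u s) ⬝ᵥ (L *ᵥ (w s - u s))) := by linarith
  have hexp1 : Real.exp t * Real.exp (-t) = 1 := by rw [← Real.exp_add]; simp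
  have hP : ((w t - ums t) ⬝ᵥ (C *ᵥ (w t - ums t)) +
      ∫ x in (0:ℝ)..t, (w x - ums x) ⬝ᵥ (L *ᵥ (w x - ums x))) ≤
      Real.exp t * ((w 0 - ums 0) ⬝ᵥ (C *ᵥ (w 0 - ums 0)) +
        ∫ s in (0:ℝ)..t, ((w' s - u' s) ⬝ᵥ (C *ᵥ (w' s - u' s)) +
          (w s - u s) ⬝ᵥ (L *ᵥ (w s - u s)))) := by
    have h3 := mul_le_mul_of_nonneg_left h2 (Real.exp_pos t).le
    rw [← mul_assoc, hexp1, one_mul] at h3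
    exact h3
  -- final assembly
  have hrw : u t - ums t = (w t - ums t) - (w t - u t) := by abel
  have hC1 : (u t - ums t) ⬝ᵥ (C *ᵥ (u t - ums t)) ≤
      2 * ((w t - ums t) ⬝ᵥ (C *ᵥ (w t - ums t))) +
      2 * ((w t - u t) ⬝ᵥ (C *ᵥ (w t - u t))) := by
    rw [hrw]; exact mypsd_sub_le hC.posSemidef _ _
  have hintL : (∫ s in (0:ℝ)..t, (u s - ums s) ⬝ᵥ (L *ᵥ (u s - ums s))) ≤
      ∫ s in (0:ℝ)..t, (2 * ((w s - ums s) ⬝ᵥ (L *ᵥ (w s - ums s))) +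
        2 * ((w s - u s) ⬝ᵥ (L *ᵥ (w s - u s)))) := by
    refine intervalIntegral.integral_mono_on ht0 intUL
      ((intEL.const_mul 2).add (intRL.const_mul 2)) (fun s _ => ?_)
    have hrw2 : u s - ums s = (w s - ums s) - (w s - u s) := by abel
    rw [hrw2]; exact mypsd_sub_le hL _ _
  rw [intervalIntegral.integral_add (intEL.const_mul 2) (intRL.const_mul 2),
    intervalIntegral.integral_const_mul, intervalIntegral.integral_const_mul] at hintL
  linarith
end

section
/- Let wⁿ ∈ V be arbitrary and set eⁿ = wⁿ − u_msⁿ. Then one step of the Galerkin backward Euler scheme satisfies the error inequality ‖eⁿ‖_C² + τ ‖eⁿ‖_L² ≤ 2 ‖uⁿ⁻¹ − u_msⁿ⁻¹‖_C² + 2 ‖wⁿ − uⁿ‖_C² + τ ‖wⁿ − uⁿ‖_L². -/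
open Matrix
set_option maxHeartbeats 1000000

lemma symdot {n : ℕ} {M : Matrix (Fin n) (Fin n) ℝ} (hM : M.IsHermitian)
    (x y : Fin n → ℝ) : x ⬝ᵥ (M *ᵥ y) = y ⬝ᵥ (M *ᵥ x) := by
  have hMt : Mᵀ = M := by
    have := hM.eq
    rwa [conjTranspose_eq_transpose_of_trivial] at this
  rw [dotProduct_mulVec, ← mulVec_transpose, hMt, dotProduct_comm]

lemma psd_nonneg {n : ℕ} {M : Matrix (Fin n) (Fin n) ℝ} (hM : M.PosSemidef)
    (x : Fin n → ℝ) : 0 ≤ x ⬝ᵥ (M *ᵥ x) := by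
  have := hM.dotProduct_mulVec_nonneg x
  simpa using this

/-- One-step error inequality for the Galerkin backward Euler scheme:
with `eⁿ = wⁿ − u_msⁿ`,
`‖eⁿ‖_C² + τ ‖eⁿ‖_L² ≤ 2 ‖uⁿ⁻¹ − u_msⁿ⁻¹‖_C² + 2 ‖wⁿ − uⁿ‖_C² + τ ‖wⁿ − uⁿ‖_L²`. -/
theorem galerkin_backward_euler_one_step_error (N : ℕ) (hN : 1 ≤ N)
    (C L : Matrix (Fin N) (Fin N) ℝ) (hC : C.PosDef) (hL : L.PosSemidef)
    (V : Submodule ℝ (Fin N → ℝ)) (τ : ℝ) (hτ : 0 < τ)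
    (uPrev uCur fn : Fin N → ℝ)
    (hfine : C *ᵥ (τ⁻¹ • (uCur - uPrev)) + L *ᵥ uCur = fn)
    (umsPrev umsCur : Fin N → ℝ)
    (humsPrev : umsPrev ∈ V) (humsCur : umsCur ∈ V)
    (hgal : ∀ v ∈ V,
      v ⬝ᵥ (C *ᵥ (τ⁻¹ • (umsCur - umsPrev)) + L *ᵥ umsCur - fn) = 0)
    (wn : Fin N → ℝ) (hwn : wn ∈ V) :
    (wn - umsCur) ⬝ᵥ (C *ᵥ (wn - umsCur)) +
        τ * ((wn - umsCur) ⬝ᵥ (L *ᵥ (wn - umsCur))) ≤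
      2 * ((uPrev - umsPrev) ⬝ᵥ (C *ᵥ (uPrev - umsPrev))) +
        2 * ((wn - uCur) ⬝ᵥ (C *ᵥ (wn - uCur))) +
          τ * ((wn - uCur) ⬝ᵥ (L *ᵥ (wn - uCur))) := by
  have hτne : τ ≠ 0 := ne_of_gt hτ
  set e : Fin N → ℝ := wn - umsCur with he
  have hEmem : e ∈ V := V.sub_mem hwn humsCur
  have h1 := hgal e hEmem
  rw [← hfine] at h1
  -- e-level orthogonality, expanded to base atoms
  simp only [he, mulVec_smul, mulVec_sub, mulVec_add, dotProduct_add,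
    dotProduct_sub, sub_dotProduct, dotProduct_smul, smul_eq_mul] at h1
  -- clear the τ⁻¹ by multiplying through by τ
  have h3 := congrArg (fun t => τ * t) h1
  simp only [mul_zero] at h3
  rw [mul_sub, mul_add, mul_add, ← mul_assoc, ← mul_assoc, mul_inv_cancel₀ hτne,
    one_mul, one_mul] at h3
  -- symmetry facts
  have sC := fun x y => symdot hC.1 x y
  have sL := fun x y => symdot hL.1 x y
  have sLτ : ∀ x y : Fin N → ℝ, τ * (x ⬝ᵥ (L *ᵥ y)) = τ * (y ⬝ᵥ (L *ᵥ x)) :=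
    fun x y => by rw [symdot hL.1]
  -- positivity facts
  have p1 : 0 ≤ (e - (2:ℝ) • (uPrev - umsPrev)) ⬝ᵥ (C *ᵥ (e - (2:ℝ) • (uPrev - umsPrev))) :=
    psd_nonneg hC.posSemidef _
  have p2 : 0 ≤ (e - (2:ℝ) • (wn - uCur)) ⬝ᵥ (C *ᵥ (e - (2:ℝ) • (wn - uCur))) :=
    psd_nonneg hC.posSemidef _
  have p3 : 0 ≤ τ * ((e - (wn - uCur)) ⬝ᵥ (L *ᵥ (e - (wn - uCur)))) :=
    mul_nonneg hτ.le (psd_nonneg hL _)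
  simp only [he, mulVec_sub, mulVec_smul, dotProduct_sub, sub_dotProduct,
    dotProduct_smul, smul_dotProduct, smul_eq_mul, mul_sub] at p1 p2 p3 ⊢
  linarith [h3, p1, p2, p3,
    sC wn umsCur, sC wn uCur, sC wn uPrev, sC wn umsPrev,
    sC umsCur uCur, sC umsCur uPrev, sC umsCur umsPrev,
    sC uCur uPrev, sC uCur umsPrev, sC uPrev umsPrev,
    sLτ wn umsCur, sLτ wn uCur, sLτ umsCur uCur]
end

section
/- For each n ≥ 1 there is a constant c_n > 0, depending only on n, such that the following holds for all data: if (uᵏ)_{k=0}^n solves the fine-scale backward Euler scheme, (u_msᵏ)_{k=0}^n ⊆ V solves the Galerkin backward Euler scheme with the same right-hand sides (fᵏ), and (wᵏ)_{k=1}^n is any sequence in V, then ‖uⁿ − u_msⁿ‖_C² + τ Σ_{k=1}^n ‖uᵏ − u_msᵏ‖_L² ≤ c_n ( ‖u⁰ − u_ms⁰‖_C² + Σ_{k=1}^n ( ‖wᵏ − uᵏ‖_C² + τ ‖wᵏ − uᵏ‖_L² ) ). The constant c_n is independent of N, C, L, V, τ, the right-hand sides and the sequences. -/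
open Matrix

lemma aux_symm {N : ℕ} (M : Matrix (Fin N) (Fin N) ℝ) (hM : M.IsHermitian)
    (x y : Fin N → ℝ) : x ⬝ᵥ M *ᵥ y = y ⬝ᵥ M *ᵥ x := by
  have hMt : Mᵀ = M := by simpa using hM.eq
  rw [dotProduct_mulVec, ← mulVec_transpose, dotProduct_comm, hMt]

lemma aux_nonneg {N : ℕ} (M : Matrix (Fin N) (Fin N) ℝ) (hM : M.PosSemidef)
    (x : Fin N → ℝ) : 0 ≤ x ⬝ᵥ M *ᵥ x := by
  simpa using hM.dotProduct_mulVec_nonneg x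

lemma aux_young {N : ℕ} (M : Matrix (Fin N) (Fin N) ℝ) (hM : M.PosSemidef)
    (x y : Fin N → ℝ) (s : ℝ) (hs : 0 < s) :
    2 * (x ⬝ᵥ M *ᵥ y) ≤ s * (x ⬝ᵥ M *ᵥ x) + s⁻¹ * (y ⬝ᵥ M *ᵥ y) := by
  have h := aux_nonneg M hM (s • x - y)
  have hsym := aux_symm M hM.1 x y
  rw [mulVec_sub, mulVec_smul, sub_dotProduct, smul_dotProduct, dotProduct_sub,
    dotProduct_sub, dotProduct_smul, dotProduct_smul, smul_eq_mul, smul_eq_mul,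
    smul_eq_mul] at h
  rw [hsym] at h ⊢
  set A := x ⬝ᵥ M *ᵥ x with hA
  set B := y ⬝ᵥ M *ᵥ y with hB
  set D := y ⬝ᵥ M *ᵥ x with hD
  rw [← sub_nonneg]
  have expand : s * A + s⁻¹ * B - 2 * D = s⁻¹ * (s * (s * A - D) - (s * D - B)) := by
    field_simp; ring
  rw [expand]
  exact mul_nonneg (inv_nonneg.2 hs.le) h

lemma aux_step {N : ℕ} (C L : Matrix (Fin N) (Fin N) ℝ)
    (hC : C.PosSemidef) (hL : L.PosSemidef) (τ : ℝ) (hτ : 0 < τ)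
    (e e' η : Fin N → ℝ)
    (horth : (e + η) ⬝ᵥ (C *ᵥ (e - e')) + τ * ((e + η) ⬝ᵥ (L *ᵥ e)) = 0) :
    e ⬝ᵥ C *ᵥ e + τ * (e ⬝ᵥ L *ᵥ e) ≤
      3 * (e' ⬝ᵥ C *ᵥ e') + 11 * (η ⬝ᵥ C *ᵥ η + τ * (η ⬝ᵥ L *ᵥ η)) := by
  have h1 : 2 * (e ⬝ᵥ C *ᵥ e') ≤ 1 * (e ⬝ᵥ C *ᵥ e) + 1⁻¹ * (e' ⬝ᵥ C *ᵥ e') :=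
    aux_young C hC e e' 1 one_pos
  have h2 : 2 * ((-η) ⬝ᵥ C *ᵥ e) ≤ 4 * ((-η) ⬝ᵥ C *ᵥ (-η)) + 4⁻¹ * (e ⬝ᵥ C *ᵥ e) :=
    aux_young C hC (-η) e 4 (by norm_num)
  have h3 : 2 * (η ⬝ᵥ C *ᵥ e') ≤ 4 * (η ⬝ᵥ C *ᵥ η) + 4⁻¹ * (e' ⬝ᵥ C *ᵥ e') :=
    aux_young C hC η e' 4 (by norm_num)
  have h4 : 2 * ((-η) ⬝ᵥ L *ᵥ e) ≤ 1 * ((-η) ⬝ᵥ L *ᵥ (-η)) + 1⁻¹ * (e ⬝ᵥ L *ᵥ e) :=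
    aux_young L hL (-η) e 1 one_pos
  have hLe : 0 ≤ e ⬝ᵥ L *ᵥ e := aux_nonneg L hL e
  have hLη : 0 ≤ η ⬝ᵥ L *ᵥ η := aux_nonneg L hL η
  have hCη : 0 ≤ η ⬝ᵥ C *ᵥ η := aux_nonneg C hC η
  have hCe' : 0 ≤ e' ⬝ᵥ C *ᵥ e' := aux_nonneg C hC e'
  simp only [neg_dotProduct, mulVec_neg, dotProduct_neg, neg_neg] at h2 h4
  rw [mulVec_sub, add_dotProduct, add_dotProduct, dotProduct_sub, dotProduct_sub] at horth
  norm_num at h1 h2 h3 h4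
  nlinarith [mul_le_mul_of_nonneg_left h4 hτ.le, mul_nonneg hτ.le hLη, mul_nonneg hτ.le hLe]

/-- For each `n ≥ 1` there is a constant `c_n > 0`, depending only on `n`,
such that for all data (dimension `N`, matrices `C`, `L`, subspace `V`, step `τ`,
right-hand sides `fᵏ`, fine-scale solution `uᵏ`, Galerkin solution `u_msᵏ ∈ V` and any
comparison sequence `wᵏ ∈ V`):
`‖uⁿ − u_msⁿ‖_C² + τ Σ_{k=1}^n ‖uᵏ − u_msᵏ‖_L² ≤
c_n (‖u⁰ − u_ms⁰‖_C² + Σ_{k=1}^n (‖wᵏ − uᵏ‖_C² + τ ‖wᵏ − uᵏ‖_L²))`. -/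
theorem galerkin_backward_euler_error_estimate :
    ∀ n : ℕ, 1 ≤ n → ∃ c : ℝ, 0 < c ∧
      ∀ (N : ℕ), 1 ≤ N →
      ∀ (C L : Matrix (Fin N) (Fin N) ℝ), C.PosDef → L.PosSemidef →
      ∀ (V : Submodule ℝ (Fin N → ℝ)) (τ : ℝ), 0 < τ →
      ∀ (u ums f w : ℕ → Fin N → ℝ),
        (∀ k : ℕ, 1 ≤ k → k ≤ n →
          C *ᵥ (τ⁻¹ • (u k - u (k - 1))) + L *ᵥ u k = f k) →
        (∀ k : ℕ, k ≤ n → ums k ∈ V) →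
        (∀ k : ℕ, 1 ≤ k → k ≤ n → ∀ v ∈ V,
          v ⬝ᵥ (C *ᵥ (τ⁻¹ • (ums k - ums (k - 1))) + L *ᵥ ums k - f k) = 0) →
        (∀ k : ℕ, 1 ≤ k → k ≤ n → w k ∈ V) →
        (u n - ums n) ⬝ᵥ (C *ᵥ (u n - ums n)) +
            τ * ∑ k ∈ Finset.Icc 1 n, (u k - ums k) ⬝ᵥ (L *ᵥ (u k - ums k)) ≤
          c * ((u 0 - ums 0) ⬝ᵥ (C *ᵥ (u 0 - ums 0)) +
            ∑ k ∈ Finset.Icc 1 n,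
              ((w k - u k) ⬝ᵥ (C *ᵥ (w k - u k)) +
                τ * ((w k - u k) ⬝ᵥ (L *ᵥ (w k - u k))))) := by
  intro n hn
  refine ⟨11 * 3 ^ n, by positivity, ?_⟩
  intro N hN C L hC hL V τ hτ u ums f w hf hums hG hw
  have hCpsd : C.PosSemidef := hC.posSemidef
  set a : ℕ → ℝ := fun j => (u j - ums j) ⬝ᵥ C *ᵥ (u j - ums j) with ha
  set ℓ : ℕ → ℝ := fun j => (u j - ums j) ⬝ᵥ L *ᵥ (u j - ums j) with hℓ
  set d : ℕ → ℝ := fun j => (w j - u j) ⬝ᵥ C *ᵥ (w j - u j) +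
      τ * ((w j - u j) ⬝ᵥ L *ᵥ (w j - u j)) with hd
  have ha0 : ∀ j, 0 ≤ a j := fun j => aux_nonneg C hCpsd _
  have hℓ0 : ∀ j, 0 ≤ ℓ j := fun j => aux_nonneg L hL _
  have hd0 : ∀ j, 0 ≤ d j := fun j =>
    add_nonneg (aux_nonneg C hCpsd _) (mul_nonneg hτ.le (aux_nonneg L hL _))
  -- per-step estimate
  have hstep : ∀ k : ℕ, 1 ≤ k → k ≤ n →
      a k + τ * ℓ k ≤ 3 * a (k - 1) + 11 * d k := by
    intro k hk1 hkn
    have hfk := hf k hk1 hkn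
    have hGk := hG k hk1 hkn (w k - ums k)
      (Submodule.sub_mem V (hw k hk1 hkn) (hums k hkn))
    have horth : ((u k - ums k) + (w k - u k)) ⬝ᵥ
          (C *ᵥ ((u k - ums k) - (u (k - 1) - ums (k - 1)))) +
        τ * (((u k - ums k) + (w k - u k)) ⬝ᵥ (L *ᵥ (u k - ums k))) = 0 := by
      rw [← hfk] at hGk
      simp only [mulVec_sub, mulVec_add, mulVec_smul, dotProduct_sub, dotProduct_add,
        dotProduct_smul, sub_dotProduct, add_dotProduct, smul_eq_mul] at hGk ⊢
      field_simp at hGk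
      linarith [hGk]
    exact aux_step C L hCpsd hL τ hτ (u k - ums k) (u (k - 1) - ums (k - 1))
      (w k - u k) horth
  -- discrete Gronwall
  have key : ∀ m : ℕ, m ≤ n →
      a m + τ * ∑ k ∈ Finset.Icc 1 m, ℓ k ≤
        11 * 3 ^ m * (a 0 + ∑ k ∈ Finset.Icc 1 m, d k) := by
    intro m
    induction m with
    | zero =>
      intro _
      simp only [Finset.Icc_eq_empty (by norm_num : ¬(1:ℕ) ≤ 0), Finset.sum_empty,
        mul_zero, add_zero, pow_zero, mul_one]
      nlinarith [ha0 0]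
    | succ m ih =>
      intro hm
      have ihm := ih (Nat.le_of_succ_le hm)
      have hs1 : 1 ≤ m + 1 := Nat.succ_le_succ (Nat.zero_le m)
      rw [Finset.sum_Icc_succ_top hs1, Finset.sum_Icc_succ_top hs1]
      have hst := hstep (m + 1) hs1 hm
      simp only [Nat.add_sub_cancel] at hst
      have hSℓ : 0 ≤ ∑ k ∈ Finset.Icc 1 m, ℓ k :=
        Finset.sum_nonneg fun k _ => hℓ0 k
      have hSd : 0 ≤ ∑ k ∈ Finset.Icc 1 m, d k :=
        Finset.sum_nonneg fun k _ => hd0 k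
      have h3m : (1 : ℝ) ≤ 3 ^ m := one_le_pow₀ (by norm_num : (1:ℝ) ≤ 3)
      have hp : (3 : ℝ) ^ (m + 1) = 3 * 3 ^ m := by ring
      rw [hp]
      nlinarith [mul_nonneg hτ.le hSℓ, hd0 (m + 1), ha0 0, ha0 m,
        mul_le_mul_of_nonneg_left (hd0 (m + 1)) (by positivity : (0:ℝ) ≤ 33 * 3 ^ m),
        mul_le_mul_of_nonneg_right h3m (hd0 (m + 1))]
  exact key n le_rfl
end
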